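/- Let d ≥ 3, let Ω ⊆ ℝ^d be open, and let σ : Ω → ℝ be C^∞. Define S(σ) := ‖∇σ‖² − (2/d)·σ·Δσ. Suppose there is a C^∞ function A : Ω → ℝ with S(σ)(x) = 1 + σ(x) · A(x) for all x ∈ Ω (σ is a normal defining density in the flat scale). Then there exist C^∞ functions w and B on Ω such that σ̄ := σ · (1 + σ·w) satisfies S(σ̄)(x) = 1 + σ(x)^d · B(x) for all x ∈ Ω. -/

import Mathlib

/-- The Euclidean Laplacian of `f : ℝ^d → ℝ` at `x`: the trace of the second derivative. -/
noncomputable def euclideanLaplacian {d : ℕ} (f : EuclideanSpace ℝ (Fin d) → ℝ)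
    (x : EuclideanSpace ℝ (Fin d)) : ℝ :=
  ∑ i : Fin d, iteratedFDeriv ℝ 2 f x ![EuclideanSpace.single i 1, EuclideanSpace.single i 1]

/-- The flat-background singular Yamabe operator `S(σ) = ‖∇σ‖² - (2/d)·σ·Δσ`. -/
noncomputable def singularYamabeS {d : ℕ} (σ : EuclideanSpace ℝ (Fin d) → ℝ)
    (x : EuclideanSpace ℝ (Fin d)) : ℝ :=
  ‖gradient σ x‖ ^ 2 - (2 / (d : ℝ)) * σ x * euclideanLaplacian σ x


noncomputable section SYaux
namespace SYaux
variable {d : ℕ}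

def pd (f : EuclideanSpace ℝ (Fin d) → ℝ) (i : Fin d) (x : EuclideanSpace ℝ (Fin d)) : ℝ :=
  fderiv ℝ f x (EuclideanSpace.single i 1)

variable {Ω : Set (EuclideanSpace ℝ (Fin d))}

theorem pd_congr (hΩ : IsOpen Ω) {f g : EuclideanSpace ℝ (Fin d) → ℝ} (hfg : ∀ y ∈ Ω, f y = g y)
    {x : EuclideanSpace ℝ (Fin d)} (hx : x ∈ Ω) {i : Fin d} : pd f i x = pd g i x := by
  have : f =ᶠ[nhds x] g := Filter.eventually_iff_exists_mem.2 ⟨Ω, hΩ.mem_nhds hx, hfg⟩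
  simp only [pd, this.fderiv_eq]

theorem contDiffOn_pd (hΩ : IsOpen Ω) {f : EuclideanSpace ℝ (Fin d) → ℝ}
    (hf : ContDiffOn ℝ (⊤ : ℕ∞) f Ω)
    {i : Fin d} : ContDiffOn ℝ (⊤ : ℕ∞) (pd f i) Ω :=
  (hf.fderiv_of_isOpen hΩ (by exact_mod_cast le_top)).clm_apply contDiffOn_const

theorem diffAt (hΩ : IsOpen Ω) {F : Type*} [NormedAddCommGroup F] [NormedSpace ℝ F]
    {f : EuclideanSpace ℝ (Fin d) → F} (hf : ContDiffOn ℝ (⊤ : ℕ∞) f Ω)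
    {x : EuclideanSpace ℝ (Fin d)} (hx : x ∈ Ω) : DifferentiableAt ℝ f x :=
  (hf.contDiffAt (hΩ.mem_nhds hx)).differentiableAt (by simp)

theorem pd_add {f g : EuclideanSpace ℝ (Fin d) → ℝ} {x : EuclideanSpace ℝ (Fin d)}
    (hf : DifferentiableAt ℝ f x) (hg : DifferentiableAt ℝ g x) {i : Fin d} :
    pd (fun y => f y + g y) i x = pd f i x + pd g i x := by
  simp [pd, fderiv_fun_add hf hg, ContinuousLinearMap.add_apply]

theorem pd_mul {f g : EuclideanSpace ℝ (Fin d) → ℝ} {x : EuclideanSpace ℝ (Fin d)}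
    (hf : DifferentiableAt ℝ f x) (hg : DifferentiableAt ℝ g x) {i : Fin d} :
    pd (fun y => f y * g y) i x = f x * pd g i x + g x * pd f i x := by
  simp [pd, fderiv_fun_mul hf hg]

theorem pd_pow {f : EuclideanSpace ℝ (Fin d) → ℝ} {x : EuclideanSpace ℝ (Fin d)}
    (hf : DifferentiableAt ℝ f x) (n : ℕ) {i : Fin d} :
    pd (fun y => f y ^ (n + 1)) i x = (n + 1 : ℝ) * f x ^ n * pd f i x := by
  induction n with
  | zero => simp [pd]
  | succ n ih =>
    have : (fun y => f y ^ (n + 1 + 1)) = fun y => f y ^ (n + 1) * f y := by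
      funext y; ring
    rw [this, pd_mul (f := fun y => f y ^ (n + 1)) (hf.pow _) hf, ih]
    push_cast; ring

/-- gradient norm squared via partial derivatives (unconditional). -/
theorem gradsq (f : EuclideanSpace ℝ (Fin d) → ℝ) (x : EuclideanSpace ℝ (Fin d)) :
    ‖gradient f x‖ ^ 2 = ∑ i, pd f i x ^ 2 := by
  have hnorm : ‖gradient f x‖ ^ 2 = ∑ i, (gradient f x i) ^ 2 := by
    rw [EuclideanSpace.norm_eq, Real.sq_sqrt (by positivity)]
    exact Finset.sum_congr rfl fun i _ => by rw [Real.norm_eq_abs, sq_abs]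
  rw [hnorm]
  refine Finset.sum_congr rfl fun i _ => ?_
  have h1 : (inner ℝ (gradient f x) (EuclideanSpace.single i (1:ℝ)) : ℝ)
      = fderiv ℝ f x (EuclideanSpace.single i 1) := by
    rw [gradient]
    exact InnerProductSpace.toDual_symm_apply
  rw [EuclideanSpace.inner_single_right] at h1
  simp only [RCLike.conj_to_real, one_mul] at h1
  rw [pd, ← h1]

theorem lap_eq (hΩ : IsOpen Ω) {f : EuclideanSpace ℝ (Fin d) → ℝ}
    (hf : ContDiffOn ℝ (⊤ : ℕ∞) f Ω) {x : EuclideanSpace ℝ (Fin d)} (hx : x ∈ Ω) :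
    euclideanLaplacian f x = ∑ i, pd (pd f i) i x := by
  have h2 : ContDiffOn ℝ (⊤ : ℕ∞) (fderiv ℝ f) Ω :=
    hf.fderiv_of_isOpen hΩ (by exact_mod_cast le_top)
  have hdf : DifferentiableAt ℝ (fderiv ℝ f) x := diffAt hΩ h2 hx
  refine Finset.sum_congr rfl fun i _ => ?_
  rw [iteratedFDeriv_two_apply]
  simp only [Matrix.cons_val_zero, Matrix.cons_val_one, Matrix.head_cons]
  have : pd (pd f i) i x
      = fderiv ℝ (fun y => (fderiv ℝ f y) (EuclideanSpace.single i 1)) x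
          (EuclideanSpace.single i 1) := rfl
  rw [this, fderiv_clm_apply hdf (differentiableAt_const _)]
  simp


/-- The singular Yamabe bilinear form in terms of partial derivatives. -/
def Pform (f g : EuclideanSpace ℝ (Fin d) → ℝ) (x : EuclideanSpace ℝ (Fin d)) : ℝ :=
  (∑ i, pd f i x * pd g i x)
    - (1/(d:ℝ)) * (f x * (∑ i, pd (pd g i) i x) + g x * (∑ i, pd (pd f i) i x))

theorem SY_eq_Pform (hΩ : IsOpen Ω) {f : EuclideanSpace ℝ (Fin d) → ℝ}
    (hf : ContDiffOn ℝ (⊤ : ℕ∞) f Ω) {x : EuclideanSpace ℝ (Fin d)} (hx : x ∈ Ω) :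
    singularYamabeS f x = Pform f f x := by
  rw [singularYamabeS, gradsq, lap_eq hΩ hf hx, Pform]
  have e : ∑ i, pd f i x * pd f i x = ∑ i, pd f i x ^ 2 :=
    Finset.sum_congr rfl fun i _ => (pow_two _).symm
  rw [e]; ring

theorem pd_pd_add (hΩ : IsOpen Ω) {f g : EuclideanSpace ℝ (Fin d) → ℝ}
    (hf : ContDiffOn ℝ (⊤ : ℕ∞) f Ω) (hg : ContDiffOn ℝ (⊤ : ℕ∞) g Ω)
    {x : EuclideanSpace ℝ (Fin d)} (hx : x ∈ Ω) {i : Fin d} :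
    pd (pd (fun y => f y + g y) i) i x = pd (pd f i) i x + pd (pd g i) i x := by
  rw [pd_congr hΩ (fun y hy => pd_add (diffAt hΩ hf hy) (diffAt hΩ hg hy)) hx]
  exact pd_add (diffAt hΩ (contDiffOn_pd hΩ hf) hx) (diffAt hΩ (contDiffOn_pd hΩ hg) hx)

theorem Pform_add_left (hΩ : IsOpen Ω) {f g v : EuclideanSpace ℝ (Fin d) → ℝ}
    (hf : ContDiffOn ℝ (⊤ : ℕ∞) f Ω) (hg : ContDiffOn ℝ (⊤ : ℕ∞) g Ω)
    {x : EuclideanSpace ℝ (Fin d)} (hx : x ∈ Ω) :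
    Pform (fun y => f y + g y) v x = Pform f v x + Pform g v x := by
  have e1 : ∑ i, pd (fun y => f y + g y) i x * pd v i x
      = (∑ i, pd f i x * pd v i x) + ∑ i, pd g i x * pd v i x := by
    rw [← Finset.sum_add_distrib]
    exact Finset.sum_congr rfl fun i _ => by
      rw [pd_add (diffAt hΩ hf hx) (diffAt hΩ hg hx)]; ring
  have e2 : ∑ i, pd (pd (fun y => f y + g y) i) i x
      = (∑ i, pd (pd f i) i x) + ∑ i, pd (pd g i) i x := by
    rw [← Finset.sum_add_distrib]
    exact Finset.sum_congr rfl fun i _ => pd_pd_add hΩ hf hg hx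
  simp only [Pform, e1, e2]
  ring

theorem Pform_comm {f g : EuclideanSpace ℝ (Fin d) → ℝ} {x : EuclideanSpace ℝ (Fin d)} :
    Pform f g x = Pform g f x := by
  simp only [Pform]
  rw [show (∑ i, pd f i x * pd g i x) = ∑ i, pd g i x * pd f i x from
    Finset.sum_congr rfl fun i _ => mul_comm _ _]
  ring

theorem Pform_self_add (hΩ : IsOpen Ω) {f g : EuclideanSpace ℝ (Fin d) → ℝ}
    (hf : ContDiffOn ℝ (⊤ : ℕ∞) f Ω) (hg : ContDiffOn ℝ (⊤ : ℕ∞) g Ω)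
    {x : EuclideanSpace ℝ (Fin d)} (hx : x ∈ Ω) :
    Pform (fun y => f y + g y) (fun y => f y + g y) x
      = Pform f f x + 2 * Pform f g x + Pform g g x := by
  rw [Pform_add_left hΩ hf hg hx,
    Pform_comm (f := f) (g := fun y => f y + g y),
    Pform_comm (f := g) (g := fun y => f y + g y),
    Pform_add_left hΩ hf hg hx, Pform_add_left hΩ hf hg hx,
    Pform_comm (f := g) (g := f)]
  ring

/-- `f` vanishes to order `m` along `σ` on `Ω`, with smooth quotient. -/
def Osig (σ : EuclideanSpace ℝ (Fin d) → ℝ) (Ω : Set (EuclideanSpace ℝ (Fin d))) (m : ℕ)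
    (f : EuclideanSpace ℝ (Fin d) → ℝ) : Prop :=
  ∃ h, ContDiffOn ℝ (⊤ : ℕ∞) h Ω ∧ ∀ x ∈ Ω, f x = σ x ^ m * h x

namespace Osig

variable {σ : EuclideanSpace ℝ (Fin d) → ℝ} {m n : ℕ} {f g : EuclideanSpace ℝ (Fin d) → ℝ}

theorem contDiffOn (hσ : ContDiffOn ℝ (⊤ : ℕ∞) σ Ω) (hf : Osig σ Ω m f) :
    ContDiffOn ℝ (⊤ : ℕ∞) f Ω := by
  obtain ⟨h, hh, he⟩ := hf
  exact (((hσ.pow m).mul hh).congr he).congr fun x hx => rfl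

theorem of_contDiffOn (hf : ContDiffOn ℝ (⊤ : ℕ∞) f Ω) : Osig σ Ω 0 f :=
  ⟨f, hf, fun x _ => by simp⟩

theorem add (hf : Osig σ Ω m f) (hg : Osig σ Ω m g) : Osig σ Ω m (fun x => f x + g x) := by
  obtain ⟨h1, hh1, he1⟩ := hf; obtain ⟨h2, hh2, he2⟩ := hg
  exact ⟨fun x => h1 x + h2 x, hh1.add hh2, fun x hx => by simp only [he1 x hx, he2 x hx]; ring⟩

theorem mul (hf : Osig σ Ω m f) (hg : Osig σ Ω n g) :
    Osig σ Ω (m + n) (fun x => f x * g x) := by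
  obtain ⟨h1, hh1, he1⟩ := hf; obtain ⟨h2, hh2, he2⟩ := hg
  exact ⟨fun x => h1 x * h2 x, hh1.mul hh2, fun x hx => by simp only [he1 x hx, he2 x hx]; ring⟩

theorem const_mul (hf : Osig σ Ω m f) (c : ℝ) : Osig σ Ω m (fun x => c * f x) := by
  obtain ⟨h1, hh1, he1⟩ := hf
  exact ⟨fun x => c * h1 x, contDiffOn_const.mul hh1, fun x hx => by simp only [he1 x hx]; ring⟩

theorem sub (hf : Osig σ Ω m f) (hg : Osig σ Ω m g) : Osig σ Ω m (fun x => f x - g x) := by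
  obtain ⟨h1, hh1, he1⟩ := hf; obtain ⟨h2, hh2, he2⟩ := hg
  exact ⟨fun x => h1 x - h2 x, hh1.sub hh2, fun x hx => by simp only [he1 x hx, he2 x hx]; ring⟩

theorem mono (hσ : ContDiffOn ℝ (⊤ : ℕ∞) σ Ω) (hmn : m ≤ n) (hf : Osig σ Ω n f) :
    Osig σ Ω m f := by
  obtain ⟨h1, hh1, he1⟩ := hf
  refine ⟨fun x => σ x ^ (n - m) * h1 x, (hσ.pow _).mul hh1, fun x hx => ?_⟩
  rw [he1 x hx, ← mul_assoc, ← pow_add, Nat.add_sub_cancel' hmn]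

theorem sum {F : Fin d → EuclideanSpace ℝ (Fin d) → ℝ} (h : ∀ i, Osig σ Ω m (F i)) :
    Osig σ Ω m (fun x => ∑ i, F i x) := by
  choose hs hsm he using h
  exact ⟨fun x => ∑ i, hs i x, ContDiffOn.sum fun i _ => hsm i, fun x hx => by
    rw [Finset.mul_sum]; exact Finset.sum_congr rfl fun i _ => he i x hx⟩

end Osig

theorem pd_sigma_pow_mul (hΩ : IsOpen Ω) {σ h : EuclideanSpace ℝ (Fin d) → ℝ}
    (hσ : ContDiffOn ℝ (⊤ : ℕ∞) σ Ω) (hh : ContDiffOn ℝ (⊤ : ℕ∞) h Ω) (n : ℕ)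
    {x : EuclideanSpace ℝ (Fin d)} (hx : x ∈ Ω) {i : Fin d} :
    pd (fun y => σ y ^ (n + 1) * h y) i x
      = σ x ^ n * ((n + 1 : ℝ) * h x * pd σ i x + σ x * pd h i x) := by
  rw [pd_mul (f := fun y => σ y ^ (n + 1)) ((diffAt hΩ hσ hx).pow _) (diffAt hΩ hh hx), pd_pow (diffAt hΩ hσ hx)]
  ring

theorem Osig.pd' (hΩ : IsOpen Ω) {σ f : EuclideanSpace ℝ (Fin d) → ℝ}
    (hσ : ContDiffOn ℝ (⊤ : ℕ∞) σ Ω) {m : ℕ} (hf : Osig σ Ω (m + 1) f) (i : Fin d) :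
    Osig σ Ω m (pd f i) := by
  obtain ⟨h1, hh1, he1⟩ := hf
  refine ⟨fun x => (m + 1 : ℝ) * h1 x * pd σ i x + σ x * pd h1 i x,
    ((contDiffOn_const.mul hh1).mul (contDiffOn_pd hΩ hσ)).add
      (hσ.mul (contDiffOn_pd hΩ hh1)), fun x hx => ?_⟩
  rw [pd_congr hΩ he1 hx, pd_sigma_pow_mul hΩ hσ hh1 m hx]

theorem Osig.Pform' (hΩ : IsOpen Ω) {σ f g : EuclideanSpace ℝ (Fin d) → ℝ}
    (hσ : ContDiffOn ℝ (⊤ : ℕ∞) σ Ω) {p q : ℕ}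
    (hf : Osig σ Ω (p + 2) f) (hg : Osig σ Ω (q + 2) g) :
    Osig σ Ω (p + q + 2) (fun x => Pform f g x) := by
  have s1 : Osig σ Ω (p + q + 2) (fun x => ∑ i, pd f i x * pd g i x) := by
    refine Osig.sum fun i => ?_
    rw [show p + q + 2 = (p+1) + (q+1) from by omega]
    exact (Osig.pd' hΩ hσ (m := p + 1) hf i).mul (Osig.pd' hΩ hσ (m := q + 1) hg i)
  have s2 : Osig σ Ω (p + q + 2) (fun x => f x * ∑ i, pd (pd g i) i x) := by
    rw [show p + q + 2 = (p+2) + q from by omega]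
    exact hf.mul (Osig.sum fun i =>
      Osig.pd' hΩ hσ (m := q) (Osig.pd' hΩ hσ (m := q + 1) hg i) i)
  have s3 : Osig σ Ω (p + q + 2) (fun x => g x * ∑ i, pd (pd f i) i x) := by
    rw [show p + q + 2 = (q+2) + p from by omega]
    exact hg.mul (Osig.sum fun i =>
      Osig.pd' hΩ hσ (m := p) (Osig.pd' hΩ hσ (m := p + 1) hf i) i)
  exact s1.sub (((s2.add s3)).const_mul (1/(d:ℝ)))


theorem Pform_sigma_key (hΩ : IsOpen Ω) (hd : 0 < d) {σ G η : EuclideanSpace ℝ (Fin d) → ℝ}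
    (hσ : ContDiffOn ℝ (⊤ : ℕ∞) σ Ω) (hG : ContDiffOn ℝ (⊤ : ℕ∞) G Ω)
    (hη : ContDiffOn ℝ (⊤ : ℕ∞) η Ω)
    (hg : ∀ x ∈ Ω, (∑ i, pd σ i x ^ 2) = 1 + σ x * G x) (m : ℕ) :
    ∃ R, ContDiffOn ℝ (⊤ : ℕ∞) R Ω ∧ ∀ x ∈ Ω,
      Pform σ (fun y => σ y ^ (m + 1 + 1) * η y) x
        = ((m : ℝ) + 2) * (1 - ((m : ℝ) + 1)/(d : ℝ)) * (σ x ^ (m + 1) * η x)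
          + σ x ^ (m + 1 + 1) * R x := by
  have hd0 : (d : ℝ) ≠ 0 := Nat.cast_ne_zero.2 hd.ne'
  set v : EuclideanSpace ℝ (Fin d) → ℝ := fun y => σ y ^ (m + 1 + 1) * η y with hv
  set q : Fin d → EuclideanSpace ℝ (Fin d) → ℝ :=
    fun i y => ((m : ℝ) + 2) * η y * pd σ i y + σ y * pd η i y with hq
  have hqs : ∀ i, ContDiffOn ℝ (⊤ : ℕ∞) (q i) Ω := fun i =>
    ((contDiffOn_const.mul hη).mul (contDiffOn_pd hΩ hσ)).add
      (hσ.mul (contDiffOn_pd hΩ hη))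
  -- first derivative of v on Ω
  have e1 : ∀ i, ∀ y ∈ Ω, pd v i y = σ y ^ (m + 1) * q i y := by
    intro i y hy
    rw [hv, pd_sigma_pow_mul hΩ hσ hη (m + 1) hy, hq]
    push_cast; ring
  refine ⟨fun x => (1 - ((m : ℝ) + 1)/(d : ℝ))
        * (((m : ℝ) + 2) * η x * G x + ∑ i, pd σ i x * pd η i x)
      - (1/(d : ℝ)) * ((∑ i, pd (q i) i x) + η x * ∑ i, pd (pd σ i) i x),
    ?_, ?_⟩
  · apply ContDiffOn.sub
    · exact contDiffOn_const.mul ((((contDiffOn_const.mul hη).mul hG)).add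
        (ContDiffOn.sum fun i _ => (contDiffOn_pd hΩ hσ).mul (contDiffOn_pd hΩ hη)))
    · exact contDiffOn_const.mul ((ContDiffOn.sum fun i _ => contDiffOn_pd hΩ (hqs i)).add
        (hη.mul (ContDiffOn.sum fun i _ => contDiffOn_pd hΩ (contDiffOn_pd hΩ hσ)))) 
  intro x hx
  have TA : ∑ i, pd σ i x * pd v i x
      = σ x ^ (m + 1) * (((m : ℝ) + 2) * η x * (∑ i, pd σ i x ^ 2)
          + σ x * ∑ i, pd σ i x * pd η i x) := by
    trans (∑ i, ((σ x ^ (m + 1) * (((m : ℝ) + 2) * η x)) * pd σ i x ^ 2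
        + (σ x ^ (m + 1) * σ x) * (pd σ i x * pd η i x)))
    · refine Finset.sum_congr rfl fun i _ => ?_
      rw [e1 i x hx]
      simp only [hq]
      ring
    · rw [Finset.sum_add_distrib, ← Finset.mul_sum, ← Finset.mul_sum]
      ring
  have TB : ∑ i, pd (pd v i) i x
      = σ x ^ m * (((m : ℝ) + 1) * (((m : ℝ) + 2) * η x * (∑ i, pd σ i x ^ 2)
            + σ x * ∑ i, pd σ i x * pd η i x)
          + σ x * ∑ i, pd (q i) i x) := by
    have step : ∀ i, pd (pd v i) i x
        = σ x ^ m * (((m : ℝ) + 1) * q i x * pd σ i x + σ x * pd (q i) i x) := by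
      intro i
      rw [pd_congr hΩ (e1 i) hx, pd_sigma_pow_mul hΩ hσ (hqs i) m hx]
    trans (∑ i, ((σ x ^ m * (((m : ℝ) + 1) * (((m : ℝ) + 2) * η x))) * pd σ i x ^ 2
        + (σ x ^ m * (((m : ℝ) + 1) * σ x)) * (pd σ i x * pd η i x)
        + (σ x ^ m * σ x) * pd (q i) i x))
    · refine Finset.sum_congr rfl fun i _ => ?_
      rw [step i]
      simp only [hq]
      ring
    · rw [Finset.sum_add_distrib, Finset.sum_add_distrib, ← Finset.mul_sum,
        ← Finset.mul_sum, ← Finset.mul_sum]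
      ring
  simp only [Pform, hv]
  rw [TA, TB, hg x hx]
  field_simp
  ring

theorem sy_step (hΩ : IsOpen Ω) {σ G w A1 : EuclideanSpace ℝ (Fin d) → ℝ} (n : ℕ)
    (hlt : n + 1 < d)
    (hσ : ContDiffOn ℝ (⊤ : ℕ∞) σ Ω) (hG : ContDiffOn ℝ (⊤ : ℕ∞) G Ω)
    (hw : ContDiffOn ℝ (⊤ : ℕ∞) w Ω) (hA1 : ContDiffOn ℝ (⊤ : ℕ∞) A1 Ω)
    (hg : ∀ x ∈ Ω, (∑ i, pd σ i x ^ 2) = 1 + σ x * G x)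
    (hP : ∀ x ∈ Ω, Pform (fun z => σ z * (1 + σ z * w z)) (fun z => σ z * (1 + σ z * w z)) x
      = 1 + σ x ^ (n + 1) * A1 x) :
    ∃ w' A2, ContDiffOn ℝ (⊤ : ℕ∞) w' Ω ∧ ContDiffOn ℝ (⊤ : ℕ∞) A2 Ω ∧
      ∀ x ∈ Ω, Pform (fun z => σ z * (1 + σ z * w' z)) (fun z => σ z * (1 + σ z * w' z)) x
        = 1 + σ x ^ (n + 1 + 1) * A2 x := by
  have hd : 0 < d := by omega
  have hdR : (d : ℝ) ≠ 0 := Nat.cast_ne_zero.2 hd.ne'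
  have hnd : ((n : ℝ) + 1) < (d : ℝ) := by exact_mod_cast (by omega : n + 1 < d)
  have hD0 : 2 * ((n : ℝ) + 2) * ((d : ℝ) - ((n : ℝ) + 1)) ≠ 0 := by
    have : (0:ℝ) < (d : ℝ) - ((n : ℝ) + 1) := by linarith
    positivity
  -- the correction function
  have hηs : ContDiffOn ℝ (⊤ : ℕ∞)
      (fun z => -((d : ℝ) * A1 z) / (2 * ((n : ℝ) + 2) * ((d : ℝ) - ((n : ℝ) + 1)))) Ω :=
    ((contDiffOn_const.mul hA1).neg).div_const _
  obtain ⟨R, hR, hkey⟩ := Pform_sigma_key hΩ hd hσ hG hηs hg n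
  have hτs : ContDiffOn ℝ (⊤ : ℕ∞) (fun z => σ z * (1 + σ z * w z)) Ω :=
    hσ.mul (contDiffOn_const.add (hσ.mul hw))
  have hvs : ContDiffOn ℝ (⊤ : ℕ∞)
      (fun y => σ y ^ (n + 1 + 1)
        * (-((d : ℝ) * A1 y) / (2 * ((n : ℝ) + 2) * ((d : ℝ) - ((n : ℝ) + 1))))) Ω :=
    (hσ.pow _).mul hηs
  have hrs : ContDiffOn ℝ (⊤ : ℕ∞) (fun z => σ z ^ 2 * w z) Ω := (hσ.pow 2).mul hw
  have hrO : Osig σ Ω 2 (fun z => σ z ^ 2 * w z) := ⟨w, hw, fun x _ => rfl⟩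
  have hvO : Osig σ Ω (n + 1 + 1)
      (fun y => σ y ^ (n + 1 + 1)
        * (-((d : ℝ) * A1 y) / (2 * ((n : ℝ) + 2) * ((d : ℝ) - ((n : ℝ) + 1))))) :=
    ⟨_, hηs, fun x _ => rfl⟩
  obtain ⟨h2, hh2, he2⟩ : Osig σ Ω (n + 2) (fun x => Pform (fun z => σ z ^ 2 * w z)
      (fun y => σ y ^ (n + 1 + 1)
        * (-((d : ℝ) * A1 y) / (2 * ((n : ℝ) + 2) * ((d : ℝ) - ((n : ℝ) + 1))))) x) := by
    exact Osig.mono hσ (by omega) (Osig.Pform' hΩ hσ (p := 0) (q := n) hrO hvO)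
  obtain ⟨h3, hh3, he3⟩ : Osig σ Ω (n + 2) (fun x => Pform
      (fun y => σ y ^ (n + 1 + 1)
        * (-((d : ℝ) * A1 y) / (2 * ((n : ℝ) + 2) * ((d : ℝ) - ((n : ℝ) + 1)))))
      (fun y => σ y ^ (n + 1 + 1)
        * (-((d : ℝ) * A1 y) / (2 * ((n : ℝ) + 2) * ((d : ℝ) - ((n : ℝ) + 1))))) x) :=
    Osig.mono hσ (by omega) (Osig.Pform' hΩ hσ (p := n) (q := n) hvO hvO)
  refine ⟨fun z => w z + σ z ^ n
      * (-((d : ℝ) * A1 z) / (2 * ((n : ℝ) + 2) * ((d : ℝ) - ((n : ℝ) + 1)))),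
    fun x => 2 * R x + 2 * h2 x + h3 x,
    hw.add ((hσ.pow n).mul hηs),
    ((contDiffOn_const.mul hR).add (contDiffOn_const.mul hh2)).add hh3, ?_⟩
  intro x hx
  rw [show (fun z => σ z * (1 + σ z * (w z + σ z ^ n
        * (-((d : ℝ) * A1 z) / (2 * ((n : ℝ) + 2) * ((d : ℝ) - ((n : ℝ) + 1)))))))
      = (fun z => (σ z * (1 + σ z * w z)) + σ z ^ (n + 1 + 1)
        * (-((d : ℝ) * A1 z) / (2 * ((n : ℝ) + 2) * ((d : ℝ) - ((n : ℝ) + 1)))))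
    from by funext z; ring]
  rw [Pform_self_add hΩ hτs hvs hx]
  have hPtv : Pform (fun z => σ z * (1 + σ z * w z))
      (fun y => σ y ^ (n + 1 + 1)
        * (-((d : ℝ) * A1 y) / (2 * ((n : ℝ) + 2) * ((d : ℝ) - ((n : ℝ) + 1))))) x
      = Pform σ (fun y => σ y ^ (n + 1 + 1)
          * (-((d : ℝ) * A1 y) / (2 * ((n : ℝ) + 2) * ((d : ℝ) - ((n : ℝ) + 1))))) x
        + Pform (fun z => σ z ^ 2 * w z) (fun y => σ y ^ (n + 1 + 1)
          * (-((d : ℝ) * A1 y) / (2 * ((n : ℝ) + 2) * ((d : ℝ) - ((n : ℝ) + 1))))) x := by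
    rw [show (fun z => σ z * (1 + σ z * w z)) = (fun z => σ z + σ z ^ 2 * w z)
      from by funext z; ring]
    exact Pform_add_left hΩ hσ hrs hx
  have he2' : Pform (fun z => σ z ^ 2 * w z)
      (fun y => σ y ^ (n + 1 + 1)
        * (-((d : ℝ) * A1 y) / (2 * ((n : ℝ) + 2) * ((d : ℝ) - ((n : ℝ) + 1))))) x
      = σ x ^ (n + 2) * h2 x := he2 x hx
  have he3' : Pform (fun y => σ y ^ (n + 1 + 1)
        * (-((d : ℝ) * A1 y) / (2 * ((n : ℝ) + 2) * ((d : ℝ) - ((n : ℝ) + 1)))))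
      (fun y => σ y ^ (n + 1 + 1)
        * (-((d : ℝ) * A1 y) / (2 * ((n : ℝ) + 2) * ((d : ℝ) - ((n : ℝ) + 1))))) x
      = σ x ^ (n + 2) * h3 x := he3 x hx
  rw [hP x hx, hPtv, hkey x hx, he2', he3']
  show _ = 1 + σ x ^ (n + 1 + 1) * (2 * R x + 2 * h2 x + h3 x)
  have hD1 : (d : ℝ) - ((n : ℝ) + 1) ≠ 0 := by linarith
  field_simp
  ring

end SYaux
end SYaux

open SYaux in
/-- Existence part of Theorem 4.6 (flat background): if `σ` is a normal defining density
(`S(σ) = 1 + σ·A` on `Ω` with `A` smooth), then there exist smooth `w, B` such that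
`σ̄ := σ·(1 + σ·w)` is a conformal unit defining density: `S(σ̄) = 1 + σ^d·B` on `Ω`. -/
theorem conformal_unit_defining_density_exists
    (d : ℕ) (hd : 3 ≤ d) (Ω : Set (EuclideanSpace ℝ (Fin d))) (hΩ : IsOpen Ω)
    (σ A : EuclideanSpace ℝ (Fin d) → ℝ)
    (hσ : ContDiffOn ℝ (⊤ : ℕ∞) σ Ω) (hA : ContDiffOn ℝ (⊤ : ℕ∞) A Ω)
    (h : ∀ x ∈ Ω, singularYamabeS σ x = 1 + σ x * A x) :
    ∃ w B : EuclideanSpace ℝ (Fin d) → ℝ,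
      ContDiffOn ℝ (⊤ : ℕ∞) w Ω ∧ ContDiffOn ℝ (⊤ : ℕ∞) B Ω ∧
      ∀ x ∈ Ω,
        singularYamabeS (fun z => σ z * (1 + σ z * w z)) x = 1 + σ x ^ d * B x := by
  have hG : ContDiffOn ℝ (⊤ : ℕ∞)
      (fun x => A x + (2/(d:ℝ)) * ∑ i, pd (pd σ i) i x) Ω :=
    hA.add (contDiffOn_const.mul
      (ContDiffOn.sum fun i _ => contDiffOn_pd hΩ (contDiffOn_pd hΩ hσ)))
  have hg : ∀ x ∈ Ω, (∑ i, pd σ i x ^ 2)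
      = 1 + σ x * (A x + (2/(d:ℝ)) * ∑ i, pd (pd σ i) i x) := by
    intro x hx
    have hb := h x hx
    rw [singularYamabeS, gradsq, lap_eq hΩ hσ hx] at hb
    linear_combination hb
  have main : ∀ n : ℕ, n + 1 ≤ d →
      ∃ w A', ContDiffOn ℝ (⊤ : ℕ∞) w Ω ∧ ContDiffOn ℝ (⊤ : ℕ∞) A' Ω ∧
        ∀ x ∈ Ω, Pform (fun z => σ z * (1 + σ z * w z)) (fun z => σ z * (1 + σ z * w z)) x
          = 1 + σ x ^ (n + 1) * A' x := by
    intro n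
    induction n with
    | zero =>
      intro _
      refine ⟨fun _ => 0, A, contDiffOn_const, hA, fun x hx => ?_⟩
      rw [show (fun z => σ z * (1 + σ z * (fun _ : EuclideanSpace ℝ (Fin d) => (0:ℝ)) z)) = σ
        from by funext z; simp]
      rw [← SY_eq_Pform hΩ hσ hx, h x hx, pow_one]
    | succ n ih =>
      intro hle
      obtain ⟨w, A1, hw, hA1, hP⟩ := ih (by omega)
      exact sy_step hΩ n (by omega) hσ hG hw hA1 hg hP
  obtain ⟨w, B, hw, hB, hfin⟩ := main (d - 1) (by omega)
  have hd1 : d - 1 + 1 = d := by omega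
  rw [hd1] at hfin
  refine ⟨w, B, hw, hB, fun x hx => ?_⟩
  rw [SY_eq_Pform hΩ (hσ.mul (contDiffOn_const.add (hσ.mul hw))) hx]
  exact hfin x hx
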